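/- There exists an incomplete Hamilton-Waterloo design IHW(45, 15; 3, 5, 15, 0, 6, 1): a decomposition of K_45 − E(K_15) into 15 C_3-factors on all 45 vertices, 6 holey C_3-factors, and 1 holey C_5-factor (each holey factor covering exactly the 30 vertices outside the hole). -/

import Mathlib

open SimpleGraph

/-- A `C_k`-factor: a spanning 2-regular subgraph all of whose connected
components (necessarily cycles) have exactly `k` vertices. -/
def IsCycleFactor {V : Type*} (H : SimpleGraph V) (k : ℕ) : Prop :=
  (∀ v : V, (H.neighborSet v).ncard = 2) ∧
  (∀ v : V, (H.connectedComponentMk v).supp.ncard = k)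

/-- A 1-factor (perfect matching): every vertex has exactly one neighbour. -/
def IsOneFactor {V : Type*} (H : SimpleGraph V) : Prop :=
  ∀ v : V, (H.neighborSet v).ncard = 1

/-- `F 0, …, F (N-1)` partitions the edge set of `G`. -/
def IsDecompOn {V : Type*} (G : SimpleGraph V) (F : ℕ → SimpleGraph V) (N : ℕ) : Prop :=
  (∀ i < N, F i ≤ G) ∧
  (∀ i < N, ∀ j < N, i ≠ j → Disjoint (F i).edgeSet (F j).edgeSet) ∧
  G.edgeSet = ⋃ i ∈ Set.Iio N, (F i).edgeSet

/-- A Hamilton–Waterloo decomposition of a graph `G` into `α` `C_m`-factors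
and `β` `C_n`-factors. -/
def IsHWGraph {V : Type*} (G : SimpleGraph V) (m n α β : ℕ) : Prop :=
  ∃ F : ℕ → SimpleGraph V, IsDecompOn G F (α + β) ∧
    (∀ i < α, IsCycleFactor (F i) m) ∧
    (∀ i, α ≤ i → i < α + β → IsCycleFactor (F i) n)

/-- `HW v m n α β`: a partition of `E(K_v)` (for `v` odd) or of `E(K_v)` minus a
perfect matching (for `v` even) into `α` `C_m`-factors and `β` `C_n`-factors. -/
def HW (v m n α β : ℕ) : Prop :=
  ∃ I : SimpleGraph (Fin v),
    (Odd v → I = ⊥) ∧ (Even v → IsOneFactor I) ∧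
    IsHWGraph ((⊤ : SimpleGraph (Fin v)) \ I) m n α β

/-- The complete `u`-partite graph with parts of size `g`. -/
def Kpartite (u g : ℕ) : SimpleGraph (Fin u × Fin g) :=
  SimpleGraph.fromRel (fun a b => a.1 ≠ b.1)

/-- The Cayley graph on an additive group with connection set `S`. -/
def cayley (Γ : Type*) [AddGroup Γ] (S : Set Γ) : SimpleGraph Γ :=
  SimpleGraph.fromRel (fun a b => a - b ∈ S)

/-- A holey `C_k`-factor of the complete multipartite graph with respect to the
part `i`: it covers exactly the vertices outside part `i`, is 2-regular there,
and all of its components have `k` vertices. -/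
def IsHoleyCycleFactor {u g : ℕ} (H : SimpleGraph (Fin u × Fin g)) (i : Fin u) (k : ℕ) : Prop :=
  (∀ v, v.1 ≠ i → (H.neighborSet v).ncard = 2) ∧
  (∀ v, v.1 = i → (H.neighborSet v).ncard = 0) ∧
  (∀ v, v.1 ≠ i → (H.connectedComponentMk v).supp.ncard = k)

/-- A cycle frame `CF(g^u; m, n, α, β)`: a partition of `E(K_u[g])` into holey
2-factors such that with respect to each part there are exactly `α` holey
`C_m`-factors and `β` holey `C_n`-factors. -/
def IsCF (u g m n α β : ℕ) : Prop :=
  ∃ F : Fin u → ℕ → SimpleGraph (Fin u × Fin g),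
    (∀ i, ∀ j < α + β, F i j ≤ Kpartite u g) ∧
    (∀ i, ∀ j < α + β, ∀ i', ∀ j' < α + β, (i, j) ≠ (i', j') →
      Disjoint (F i j).edgeSet (F i' j').edgeSet) ∧
    ((Kpartite u g).edgeSet = ⋃ i, ⋃ j ∈ Set.Iio (α + β), (F i j).edgeSet) ∧
    (∀ i, ∀ j < α, IsHoleyCycleFactor (F i j) i m) ∧
    (∀ i j, α ≤ j → j < α + β → IsHoleyCycleFactor (F i j) i n)

/-- The complete graph `K_v` minus the edges of the complete subgraph on the
first `h` vertices (the hole). -/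
def KminusHole (v h : ℕ) : SimpleGraph (Fin v) :=
  SimpleGraph.fromRel (fun a b => ¬ (a.val < h ∧ b.val < h))

/-- A holey `C_k`-factor with respect to the hole consisting of the first `h`
vertices of `Fin v`. -/
def IsHoleyCycleFactorFin {v : ℕ} (H : SimpleGraph (Fin v)) (h k : ℕ) : Prop :=
  (∀ x : Fin v, h ≤ x.val → (H.neighborSet x).ncard = 2) ∧
  (∀ x : Fin v, x.val < h → (H.neighborSet x).ncard = 0) ∧
  (∀ x : Fin v, h ≤ x.val → (H.connectedComponentMk x).supp.ncard = k)

/-- An incomplete Hamilton–Waterloo design `IHW(v, h; m, n, α, β, α', β')`: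
a decomposition of `K_v − E(K_h)` (minus a 1-factor on the `v - h` non-hole
vertices when `v` is even) into `α` `C_m`-factors and `β` `C_n`-factors of `K_v`,
and `α'` holey `C_m`-factors and `β'` holey `C_n`-factors missing the hole. -/
def IsIHW (v h m n α β α' β' : ℕ) : Prop :=
  ∃ I : SimpleGraph (Fin v), ∃ F : ℕ → SimpleGraph (Fin v),
    (Odd v → I = ⊥) ∧
    (Even v → ∀ x : Fin v, (I.neighborSet x).ncard = if x.val < h then 0 else 1) ∧
    IsDecompOn (KminusHole v h \ I) F (α + β + α' + β') ∧
    (∀ i < α, IsCycleFactor (F i) m) ∧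
    (∀ i, α ≤ i → i < α + β → IsCycleFactor (F i) n) ∧
    (∀ i, α + β ≤ i → i < α + β + α' → IsHoleyCycleFactorFin (F i) h m) ∧
    (∀ i, α + β + α' ≤ i → i < α + β + α' + β' → IsHoleyCycleFactorFin (F i) h n)


open SimpleGraph

namespace IHW45

def repOfT : List ℕ := [6,7,0,0,8,5,12,11,4,6,7,9,13,14,10,8,4,1,1,12,2,3,9,2,3,11,10,5,14,13]
def xsT : List ℕ := [2,17,20,21,8,27,0,1,4,11,14,25,6,29,13]
def csT : List ℕ := [8,4,5,7,13,12,11,3,1,14,9,10,2,6,0]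
def oidxT : List ℕ := [0,0,0,1,0,0,2,3,0,0,0,0,0,0,0,0,4,5,6,7,0,0,8,9,10,11,12,13]

def crossCol (i z : ℕ) : ℕ :=
  let w := (z + 60 - 2*i) % 30
  let r := repOfT.getD w 0
  (i + 15 - csT.getD r 0) % 15

def matchCol (d y : ℕ) : ℕ :=
  let r := if d = 15 then 14 else oidxT.getD (2*d + y % 2) 0
  let x := xsT.getD r 0
  let i := if d = 15 then (8*((y+30-x)%15))%15 else ((y+30-x)%30)/2
  (i + 15 - csT.getD r 0) % 15

def outerCol (z1 z2 : ℕ) : ℕ :=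
  let dp := (z1 + 30 - z2) % 30
  if dp = 0 then 99 else
  let y := if dp ≤ 15 then z2 else z1
  let d := if dp ≤ 15 then dp else 30 - dp
  if d = 4 then 15 + y % 3
  else if d = 10 then 15 + (y+2) % 3
  else if d = 14 then 15 + y % 3
  else if d = 2 then 18 + y % 3
  else if d = 7 then 18 + y % 3
  else if d = 5 then 18 + (y+1) % 3
  else if d = 6 then 21
  else matchCol d y

def col (a b : ℕ) : ℕ :=
  if a < 15 then (if b < 15 then 99 else crossCol a (b - 15))
  else if b < 15 then crossCol b (a - 15)
  else outerCol (a - 15) (b - 15)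

def Fct (i : ℕ) : SimpleGraph (Fin 45) :=
  SimpleGraph.fromRel (fun a b => col a.1 b.1 = i)

instance decAdj (i : ℕ) : DecidableRel (Fct i).Adj := fun a b =>
  inferInstanceAs (Decidable (a ≠ b ∧ (col a.1 b.1 = i ∨ col b.1 a.1 = i)))

lemma Fct_adj (i : ℕ) (a b : Fin 45) :
    (Fct i).Adj a b ↔ a ≠ b ∧ (col a.1 b.1 = i ∨ col b.1 a.1 = i) := Iff.rfl

def cgrpT : List (List (List Nat)) := [
  [[0,28,43],[1,21,32],[2,25,38],[3,22,31],[4,40,41],[5,15,18],[6,26,39],[7,20,23],[8,33,34],[9,17,29],[10,30,42],[11,16,37],[12,36,44],[13,19,27],[14,24,35]],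
  [[0,26,37],[1,15,30],[2,23,34],[3,27,40],[4,24,33],[5,42,43],[6,17,20],[7,28,41],[8,22,25],[9,35,36],[10,19,31],[11,32,44],[12,18,39],[13,16,38],[14,21,29]],
  [[0,23,31],[1,28,39],[2,17,32],[3,25,36],[4,29,42],[5,26,35],[6,15,44],[7,19,22],[8,30,43],[9,24,27],[10,37,38],[11,21,33],[12,16,34],[13,20,41],[14,18,40]],
  [[0,20,42],[1,25,33],[2,30,41],[3,19,34],[4,27,38],[5,31,44],[6,28,37],[7,16,17],[8,21,24],[9,15,32],[10,26,29],[11,39,40],[12,23,35],[13,18,36],[14,22,43]],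
  [[0,15,24],[1,22,44],[2,27,35],[3,32,43],[4,21,36],[5,29,40],[6,16,33],[7,30,39],[8,18,19],[9,23,26],[10,17,34],[11,28,31],[12,41,42],[13,25,37],[14,20,38]],
  [[0,22,40],[1,17,26],[2,16,24],[3,29,37],[4,15,34],[5,23,38],[6,31,42],[7,18,35],[8,32,41],[9,20,21],[10,25,28],[11,19,36],[12,30,33],[13,43,44],[14,27,39]],
  [[0,29,41],[1,24,42],[2,19,28],[3,18,26],[4,31,39],[5,17,36],[6,25,40],[7,33,44],[8,20,37],[9,34,43],[10,22,23],[11,27,30],[12,21,38],[13,32,35],[14,15,16]],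
  [[0,17,18],[1,31,43],[2,26,44],[3,21,30],[4,20,28],[5,33,41],[6,19,38],[7,27,42],[8,16,35],[9,22,39],[10,15,36],[11,24,25],[12,29,32],[13,23,40],[14,34,37]],
  [[0,36,39],[1,19,20],[2,15,33],[3,16,28],[4,23,32],[5,22,30],[6,35,43],[7,21,40],[8,29,44],[9,18,37],[10,24,41],[11,17,38],[12,26,27],[13,31,34],[14,25,42]],
  [[0,27,44],[1,38,41],[2,21,22],[3,17,35],[4,18,30],[5,25,34],[6,24,32],[7,15,37],[8,23,42],[9,16,31],[10,20,39],[11,26,43],[12,19,40],[13,28,29],[14,33,36]],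
  [[0,35,38],[1,16,29],[2,40,43],[3,23,24],[4,19,37],[5,20,32],[6,27,36],[7,26,34],[8,17,39],[9,25,44],[10,18,33],[11,22,41],[12,15,28],[13,21,42],[14,30,31]],
  [[0,32,33],[1,37,40],[2,18,31],[3,15,42],[4,25,26],[5,21,39],[6,22,34],[7,29,38],[8,28,36],[9,19,41],[10,16,27],[11,20,35],[12,24,43],[13,17,30],[14,23,44]],
  [[0,16,25],[1,34,35],[2,39,42],[3,20,33],[4,17,44],[5,27,28],[6,23,41],[7,24,36],[8,31,40],[9,30,38],[10,21,43],[11,18,29],[12,22,37],[13,15,26],[14,19,32]],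
  [[0,21,34],[1,18,27],[2,36,37],[3,41,44],[4,22,35],[5,16,19],[6,29,30],[7,25,43],[8,26,38],[9,33,42],[10,32,40],[11,15,23],[12,20,31],[13,24,39],[14,17,28]],
  [[0,19,30],[1,23,36],[2,20,29],[3,38,39],[4,16,43],[5,24,37],[6,18,21],[7,31,32],[8,15,27],[9,28,40],[10,35,44],[11,34,42],[12,17,25],[13,22,33],[14,26,41]],
  [[15,19,29],[16,26,42],[17,33,37],[18,22,32],[20,36,40],[21,25,35],[23,39,43],[24,28,38],[27,31,41],[30,34,44]],
  [[15,31,35],[16,20,30],[17,27,43],[18,34,38],[19,23,33],[21,37,41],[22,26,36],[24,40,44],[25,29,39],[28,32,42]],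
  [[15,25,41],[16,32,36],[17,21,31],[18,28,44],[19,35,39],[20,24,34],[22,38,42],[23,27,37],[26,30,40],[29,33,43]],
  [[15,17,22],[16,39,41],[18,20,25],[19,42,44],[21,23,28],[24,26,31],[27,29,34],[30,32,37],[33,35,40],[36,38,43]],
  [[15,20,43],[16,18,23],[17,40,42],[19,21,26],[22,24,29],[25,27,32],[28,30,35],[31,33,38],[34,36,41],[37,39,44]],
  [[15,38,40],[16,21,44],[17,19,24],[18,41,43],[20,22,27],[23,25,30],[26,28,33],[29,31,36],[32,34,39],[35,37,42]],
  [[15,21,27,33,39],[16,22,28,34,40],[17,23,29,35,41],[18,24,30,36,42],[19,25,31,37,43],[20,26,32,38,44]]]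

def nbrT : List (List (List Nat)) := [
  [[28,43],[21,32],[25,38],[22,31],[40,41],[15,18],[26,39],[20,23],[33,34],[17,29],[30,42],[16,37],[36,44],[19,27],[24,35],[5,18],[11,37],[9,29],[5,15],[13,27],[7,23],[1,32],[3,31],[7,20],[14,35],[2,38],[6,39],[13,19],[0,43],[9,17],[10,42],[3,22],[1,21],[8,34],[8,33],[14,24],[12,44],[11,16],[2,25],[6,26],[4,41],[4,40],[10,30],[0,28],[12,36]],
  [[26,37],[15,30],[23,34],[27,40],[24,33],[42,43],[17,20],[28,41],[22,25],[35,36],[19,31],[32,44],[18,39],[16,38],[21,29],[1,30],[13,38],[6,20],[12,39],[10,31],[6,17],[14,29],[8,25],[2,34],[4,33],[8,22],[0,37],[3,40],[7,41],[14,21],[1,15],[10,19],[11,44],[4,24],[2,23],[9,36],[9,35],[0,26],[13,16],[12,18],[3,27],[7,28],[5,43],[5,42],[11,32]],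
  [[23,31],[28,39],[17,32],[25,36],[29,42],[26,35],[15,44],[19,22],[30,43],[24,27],[37,38],[21,33],[16,34],[20,41],[18,40],[6,44],[12,34],[2,32],[14,40],[7,22],[13,41],[11,33],[7,19],[0,31],[9,27],[3,36],[5,35],[9,24],[1,39],[4,42],[8,43],[0,23],[2,17],[11,21],[12,16],[5,26],[3,25],[10,38],[10,37],[1,28],[14,18],[13,20],[4,29],[8,30],[6,15]],
  [[20,42],[25,33],[30,41],[19,34],[27,38],[31,44],[28,37],[16,17],[21,24],[15,32],[26,29],[39,40],[23,35],[18,36],[22,43],[9,32],[7,17],[7,16],[13,36],[3,34],[0,42],[8,24],[14,43],[12,35],[8,21],[1,33],[10,29],[4,38],[6,37],[10,26],[2,41],[5,44],[9,15],[1,25],[3,19],[12,23],[13,18],[6,28],[4,27],[11,40],[11,39],[2,30],[0,20],[14,22],[5,31]],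
  [[15,24],[22,44],[27,35],[32,43],[21,36],[29,40],[16,33],[30,39],[18,19],[23,26],[17,34],[28,31],[41,42],[25,37],[20,38],[0,24],[6,33],[10,34],[8,19],[8,18],[14,38],[4,36],[1,44],[9,26],[0,15],[13,37],[9,23],[2,35],[11,31],[5,40],[7,39],[11,28],[3,43],[6,16],[10,17],[2,27],[4,21],[13,25],[14,20],[7,30],[5,29],[12,42],[12,41],[3,32],[1,22]],
  [[22,40],[17,26],[16,24],[29,37],[15,34],[23,38],[31,42],[18,35],[32,41],[20,21],[25,28],[19,36],[30,33],[43,44],[27,39],[4,34],[2,24],[1,26],[7,35],[11,36],[9,21],[9,20],[0,40],[5,38],[2,16],[10,28],[1,17],[14,39],[10,25],[3,37],[12,33],[6,42],[8,41],[12,30],[4,15],[7,18],[11,19],[3,29],[5,23],[14,27],[0,22],[8,32],[6,31],[13,44],[13,43]],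
  [[29,41],[24,42],[19,28],[18,26],[31,39],[17,36],[25,40],[33,44],[20,37],[34,43],[22,23],[27,30],[21,38],[32,35],[15,16],[14,16],[14,15],[5,36],[3,26],[2,28],[8,37],[12,38],[10,23],[10,22],[1,42],[6,40],[3,18],[11,30],[2,19],[0,41],[11,27],[4,39],[13,35],[7,44],[9,43],[13,32],[5,17],[8,20],[12,21],[4,31],[6,25],[0,29],[1,24],[9,34],[7,33]],
  [[17,18],[31,43],[26,44],[21,30],[20,28],[33,41],[19,38],[27,42],[16,35],[22,39],[15,36],[24,25],[29,32],[23,40],[34,37],[10,36],[8,35],[0,18],[0,17],[6,38],[4,28],[3,30],[9,39],[13,40],[11,25],[11,24],[2,44],[7,42],[4,20],[12,32],[3,21],[1,43],[12,29],[5,41],[14,37],[8,16],[10,15],[14,34],[6,19],[9,22],[13,23],[5,33],[7,27],[1,31],[2,26]],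
  [[36,39],[19,20],[15,33],[16,28],[23,32],[22,30],[35,43],[21,40],[29,44],[18,37],[24,41],[17,38],[26,27],[31,34],[25,42],[2,33],[3,28],[11,38],[9,37],[1,20],[1,19],[7,40],[5,30],[4,32],[10,41],[14,42],[12,27],[12,26],[3,16],[8,44],[5,22],[13,34],[4,23],[2,15],[13,31],[6,43],[0,39],[9,18],[11,17],[0,36],[7,21],[10,24],[14,25],[6,35],[8,29]],
  [[27,44],[38,41],[21,22],[17,35],[18,30],[25,34],[24,32],[15,37],[23,42],[16,31],[20,39],[26,43],[19,40],[28,29],[33,36],[7,37],[9,31],[3,35],[4,30],[12,40],[10,39],[2,22],[2,21],[8,42],[6,32],[5,34],[11,43],[0,44],[13,29],[13,28],[4,18],[9,16],[6,24],[14,36],[5,25],[3,17],[14,33],[7,15],[1,41],[10,20],[12,19],[1,38],[8,23],[11,26],[0,27]],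
  [[35,38],[16,29],[40,43],[23,24],[19,37],[20,32],[27,36],[26,34],[17,39],[25,44],[18,33],[22,41],[15,28],[21,42],[30,31],[12,28],[1,29],[8,39],[10,33],[4,37],[5,32],[13,42],[11,41],[3,24],[3,23],[9,44],[7,34],[6,36],[12,15],[1,16],[14,31],[14,30],[5,20],[10,18],[7,26],[0,38],[6,27],[4,19],[0,35],[8,17],[2,43],[11,22],[13,21],[2,40],[9,25]],
  [[32,33],[37,40],[18,31],[15,42],[25,26],[21,39],[22,34],[29,38],[28,36],[19,41],[16,27],[20,35],[24,43],[17,30],[23,44],[3,42],[10,27],[13,30],[2,31],[9,41],[11,35],[5,39],[6,34],[14,44],[12,43],[4,26],[4,25],[10,16],[8,36],[7,38],[13,17],[2,18],[0,33],[0,32],[6,22],[11,20],[8,28],[1,40],[7,29],[5,21],[1,37],[9,19],[3,15],[12,24],[14,23]],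
  [[16,25],[34,35],[39,42],[20,33],[17,44],[27,28],[23,41],[24,36],[31,40],[30,38],[21,43],[18,29],[22,37],[15,26],[19,32],[13,26],[0,25],[4,44],[11,29],[14,32],[3,33],[10,43],[12,37],[6,41],[7,36],[0,16],[13,15],[5,28],[5,27],[11,18],[9,38],[8,40],[14,19],[3,20],[1,35],[1,34],[7,24],[12,22],[9,30],[2,42],[8,31],[6,23],[2,39],[10,21],[4,17]],
  [[21,34],[18,27],[36,37],[41,44],[22,35],[16,19],[29,30],[25,43],[26,38],[33,42],[32,40],[15,23],[20,31],[24,39],[17,28],[11,23],[5,19],[14,28],[1,27],[5,16],[12,31],[0,34],[4,35],[11,15],[13,39],[7,43],[8,38],[1,18],[14,17],[6,30],[6,29],[12,20],[10,40],[9,42],[0,21],[4,22],[2,37],[2,36],[8,26],[13,24],[10,32],[3,44],[9,33],[7,25],[3,41]],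
  [[19,30],[23,36],[20,29],[38,39],[16,43],[24,37],[18,21],[31,32],[15,27],[28,40],[35,44],[34,42],[17,25],[22,33],[26,41],[8,27],[4,43],[12,25],[6,21],[0,30],[2,29],[6,18],[13,33],[1,36],[5,37],[12,17],[14,41],[8,15],[9,40],[2,20],[0,19],[7,32],[7,31],[13,22],[11,42],[10,44],[1,23],[5,24],[3,39],[3,38],[9,28],[14,26],[11,34],[4,16],[10,35]],
  [[],[],[],[],[],[],[],[],[],[],[],[],[],[],[],[19,29],[26,42],[33,37],[22,32],[15,29],[36,40],[25,35],[18,32],[39,43],[28,38],[21,35],[16,42],[31,41],[24,38],[15,19],[34,44],[27,41],[18,22],[17,37],[30,44],[21,25],[20,40],[17,33],[24,28],[23,43],[20,36],[27,31],[16,26],[23,39],[30,34]],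
  [[],[],[],[],[],[],[],[],[],[],[],[],[],[],[],[31,35],[20,30],[27,43],[34,38],[23,33],[16,30],[37,41],[26,36],[19,33],[40,44],[29,39],[22,36],[17,43],[32,42],[25,39],[16,20],[15,35],[28,42],[19,23],[18,38],[15,31],[22,26],[21,41],[18,34],[25,29],[24,44],[21,37],[28,32],[17,27],[24,40]],
  [[],[],[],[],[],[],[],[],[],[],[],[],[],[],[],[25,41],[32,36],[21,31],[28,44],[35,39],[24,34],[17,31],[38,42],[27,37],[20,34],[15,41],[30,40],[23,37],[18,44],[33,43],[26,40],[17,21],[16,36],[29,43],[20,24],[19,39],[16,32],[23,27],[22,42],[19,35],[26,30],[15,25],[22,38],[29,33],[18,28]],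
  [[],[],[],[],[],[],[],[],[],[],[],[],[],[],[],[17,22],[39,41],[15,22],[20,25],[42,44],[18,25],[23,28],[15,17],[21,28],[26,31],[18,20],[24,31],[29,34],[21,23],[27,34],[32,37],[24,26],[30,37],[35,40],[27,29],[33,40],[38,43],[30,32],[36,43],[16,41],[33,35],[16,39],[19,44],[36,38],[19,42]],
  [[],[],[],[],[],[],[],[],[],[],[],[],[],[],[],[20,43],[18,23],[40,42],[16,23],[21,26],[15,43],[19,26],[24,29],[16,18],[22,29],[27,32],[19,21],[25,32],[30,35],[22,24],[28,35],[33,38],[25,27],[31,38],[36,41],[28,30],[34,41],[39,44],[31,33],[37,44],[17,42],[34,36],[17,40],[15,20],[37,39]],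
  [[],[],[],[],[],[],[],[],[],[],[],[],[],[],[],[38,40],[21,44],[19,24],[41,43],[17,24],[22,27],[16,44],[20,27],[25,30],[17,19],[23,30],[28,33],[20,22],[26,33],[31,36],[23,25],[29,36],[34,39],[26,28],[32,39],[37,42],[29,31],[35,42],[15,40],[32,34],[15,38],[18,43],[35,37],[18,41],[16,21]],
  [[],[],[],[],[],[],[],[],[],[],[],[],[],[],[],[21,39],[22,40],[23,41],[24,42],[25,43],[26,44],[15,27],[16,28],[17,29],[18,30],[19,31],[20,32],[21,33],[22,34],[23,35],[24,36],[25,37],[26,38],[27,39],[28,40],[29,41],[30,42],[31,43],[32,44],[15,33],[16,34],[17,35],[18,36],[19,37],[20,38]]]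

def cgrp (i : ℕ) : List (List ℕ) := cgrpT.getD i []
def nbr (i v : ℕ) : List ℕ := (nbrT.getD i []).getD v []

set_option maxRecDepth 1000000 in
lemma FactA : ∀ a < 45, ∀ b < 45, col a b = col b a ∧
    (a ≠ b → (col a b < 22 ↔ ¬(a < 15 ∧ b < 15))) := by decide +kernel

set_option maxRecDepth 1000000 in
lemma FactB : ∀ i < 22, ∀ v < 45, ∀ w < 45, ((v ≠ w ∧ col v w = i) ↔ w ∈ nbr i v) := by decide +kernel

set_option maxRecDepth 1000000 in
lemma FactB2 : ∀ i < 22, ∀ v < 45, (nbr i v).Nodup ∧ (∀ w ∈ nbr i v, w < 45) ∧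
    (nbr i v).length = (if i < 15 ∨ 15 ≤ v then 2 else 0) := by decide +kernel

def chainB (i : ℕ) : List ℕ → Bool
  | a :: b :: t => (decide (a < 45) && decide (b < 45) && (a != b) && (col a b == i)) && chainB i (b :: t)
  | _ => true

lemma chainB_chain' {i : ℕ} : ∀ {l : List ℕ}, chainB i l = true →
    l.Chain' (fun a b => a < 45 ∧ b < 45 ∧ a ≠ b ∧ col a b = i)
  | [], _ => List.isChain_nil
  | [a], _ => List.isChain_singleton a
  | a :: b :: t, h => by
    rw [chainB, Bool.and_eq_true, Bool.and_eq_true, Bool.and_eq_true, Bool.and_eq_true] at h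
    exact List.isChain_cons_cons.mpr ⟨⟨of_decide_eq_true h.1.1.1.1, of_decide_eq_true h.1.1.1.2,
      bne_iff_ne.mp h.1.1.2, beq_iff_eq.mp h.1.2⟩,
      chainB_chain' h.2⟩

set_option maxRecDepth 1000000 in
lemma FactC : ∀ i < 22, ∀ C ∈ cgrp i,
    C ≠ [] ∧
    chainB i C = true ∧
    C.Nodup ∧ (∀ x ∈ C, x < 45) ∧
    C.length = (if i = 21 then 5 else 3) ∧
    (∀ x ∈ C, ∀ y < 45, x ≠ y → col x y = i → y ∈ C) := by decide +kernel

set_option maxRecDepth 1000000 in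
lemma FactD : ∀ i < 22, ∀ v < 45, (i < 15 ∨ 15 ≤ v) →
    ((cgrp i).any fun C => decide (v ∈ C)) = true := by decide +kernel

/-! ### lifting lemmas -/

lemma colS (a b : Fin 45) : col a.1 b.1 = col b.1 a.1 := (FactA a.1 a.isLt b.1 b.isLt).1

lemma colR (a b : Fin 45) (h : a ≠ b) : col a.1 b.1 < 22 ↔ ¬(a.1 < 15 ∧ b.1 < 15) :=
  (FactA a.1 a.isLt b.1 b.isLt).2 (fun hv => h (Fin.ext hv))

lemma adj_iff {i : ℕ} {a b : Fin 45} : (Fct i).Adj a b ↔ a ≠ b ∧ col a.1 b.1 = i := by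
  rw [Fct_adj]
  constructor
  · rintro ⟨h1, h2 | h2⟩
    · exact ⟨h1, h2⟩
    · exact ⟨h1, (colS a b).trans h2⟩
  · rintro ⟨h1, h2⟩
    exact ⟨h1, Or.inl h2⟩

lemma setOf_list_ncard {L : List ℕ} (hnd : L.Nodup) (hlt : ∀ x ∈ L, x < 45) :
    {w : Fin 45 | w.1 ∈ L}.ncard = L.length := by
  classical
  have h1 : {w : Fin 45 | w.1 ∈ L} = ↑((L.pmap (fun m hm => (⟨m, hm⟩ : Fin 45)) hlt).toFinset) := by
    ext w
    simp only [Set.mem_setOf_eq, Finset.mem_coe, List.mem_toFinset, List.mem_pmap]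
    constructor
    · intro hw
      exact ⟨w.1, hw, rfl⟩
    · rintro ⟨m, hm, rfl⟩
      exact hm
  rw [h1, Set.ncard_coe_finset, List.toFinset_card_of_nodup, List.length_pmap]
  exact hnd.pmap (fun a _ b _ h => congrArg Fin.val h)

lemma chain_reachable {V : Type*} {H : SimpleGraph V} :
    ∀ {a : V} {l : List V}, List.Chain H.Adj a l → ∀ x ∈ a :: l, H.Reachable a x := by
  intro a l
  induction l generalizing a with
  | nil =>
    intro _ x hx
    rw [List.mem_singleton] at hx
    subst hx
    exact Reachable.refl x
  | cons b t ih =>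
    intro h x hx
    rcases List.chain_cons.mp h with ⟨hab, hbt⟩
    rcases List.mem_cons.mp hx with rfl | hx'
    · exact Reachable.refl x
    · exact hab.reachable.trans (ih hbt x hx')

lemma walk_closed {V : Type*} {H : SimpleGraph V} {S : Set V}
    (hS : ∀ x ∈ S, ∀ y, H.Adj x y → y ∈ S) {a b : V} (w : H.Walk a b) (ha : a ∈ S) : b ∈ S := by
  induction w with
  | nil => exact ha
  | cons h p ih => exact ih (hS _ ha _ h)

def fin45 (m : ℕ) : Fin 45 := ⟨m % 45, Nat.mod_lt m (by norm_num)⟩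

lemma supp_ncard {i : ℕ} (hi : i < 22) (v : Fin 45) (hv : i < 15 ∨ 15 ≤ v.1) :
    ((Fct i).connectedComponentMk v).supp.ncard = if i = 21 then 5 else 3 := by
  have hD := FactD i hi v.1 v.isLt hv
  rw [List.any_eq_true] at hD
  obtain ⟨C, hC, hvC⟩ := hD
  replace hvC : v.1 ∈ C := of_decide_eq_true hvC
  obtain ⟨hne, hch, hnd, hlt, hlen, hcl⟩ := FactC i hi C hC
  have hchain := chainB_chain' hch
  have hclosed : ∀ x ∈ {w : Fin 45 | w.1 ∈ C}, ∀ y : Fin 45, (Fct i).Adj x y →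
      y ∈ {w : Fin 45 | w.1 ∈ C} := by
    intro x hx y hxy
    rcases adj_iff.mp hxy with ⟨hne', hcol⟩
    exact hcl x.1 hx y.1 y.isLt (fun h => hne' (Fin.ext h)) hcol
  have hmap : List.Chain' (Fct i).Adj (C.map fin45) := by
    rw [List.Chain', List.isChain_map]
    refine hchain.imp (fun a b h => ?_)
    rcases h with ⟨ha, hb, hne', hcol⟩
    rw [adj_iff]
    refine ⟨fun hEq => hne' ?_, ?_⟩
    · have := congrArg Fin.val hEq
      simpa [fin45, Nat.mod_eq_of_lt ha, Nat.mod_eq_of_lt hb] using this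
    · show col (fin45 a).1 (fin45 b).1 = i
      simp [fin45, Nat.mod_eq_of_lt ha, Nat.mod_eq_of_lt hb, hcol]
  have hmem : ∀ x : Fin 45, x.1 ∈ C → x ∈ C.map fin45 := fun x hx =>
    List.mem_map.mpr ⟨x.1, hx, by ext; simp [fin45, Nat.mod_eq_of_lt x.isLt]⟩
  have hreach : ∀ x : Fin 45, x.1 ∈ C → ∀ y : Fin 45, y.1 ∈ C → (Fct i).Reachable x y := by
    intro x hx y hy
    have hx' := hmem x hx
    have hy' := hmem y hy
    have hmap2 := hmap
    cases hCc : C with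
    | nil => exact absurd hCc hne
    | cons c0 rest =>
      rw [hCc, List.map_cons] at hx' hy' hmap2
      exact (chain_reachable hmap2 x hx').symm.trans (chain_reachable hmap2 y hy')
  have hsupp : ((Fct i).connectedComponentMk v).supp = {w : Fin 45 | w.1 ∈ C} := by
    ext x
    simp only [ConnectedComponent.mem_supp_iff, ConnectedComponent.eq]
    constructor
    · intro h
      obtain ⟨w⟩ := h.symm
      exact walk_closed hclosed w hvC
    · intro hx
      exact hreach x hx v hvC
  rw [hsupp, setOf_list_ncard hnd hlt, hlen]

lemma deg_ncard {i : ℕ} (hi : i < 22) (v : Fin 45) :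
    ((Fct i).neighborSet v).ncard = if i < 15 ∨ 15 ≤ v.1 then 2 else 0 := by
  obtain ⟨hnd, hlt, hlen⟩ := FactB2 i hi v.1 v.isLt
  have hset : (Fct i).neighborSet v = {w : Fin 45 | w.1 ∈ nbr i v.1} := by
    ext w
    rw [mem_neighborSet, adj_iff, Set.mem_setOf_eq, ← FactB i hi v.1 v.isLt w.1 w.isLt]
    exact ⟨fun ⟨h1, h2⟩ => ⟨fun h => h1 (Fin.ext h), h2⟩,
      fun ⟨h1, h2⟩ => ⟨fun h => h1 (congrArg Fin.val h), h2⟩⟩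
  rw [hset, setOf_list_ncard hnd hlt, hlen]

lemma KmH_adj {a b : Fin 45} :
    (KminusHole 45 15).Adj a b ↔ a ≠ b ∧ ¬(a.1 < 15 ∧ b.1 < 15) := by
  rw [KminusHole, fromRel_adj]
  constructor
  · rintro ⟨h1, h2 | h2⟩
    · exact ⟨h1, h2⟩
    · exact ⟨h1, fun hc => h2 ⟨hc.2, hc.1⟩⟩
  · rintro ⟨h1, h2⟩
    exact ⟨h1, Or.inl h2⟩

end IHW45

open IHW45 in
theorem stmt_9 : IsIHW 45 15 3 5 15 0 6 1 := by
  have hG : KminusHole 45 15 \ (⊥ : SimpleGraph (Fin 45)) = KminusHole 45 15 := by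
    ext a b
    simp
  refine ⟨⊥, Fct, fun _ => rfl, fun h => absurd h (by decide), ?_, ?_, ?_, ?_, ?_⟩
  · rw [hG]
    refine ⟨?_, ?_, ?_⟩
    · intro i hi a b hab
      rcases adj_iff.mp hab with ⟨hne, hcol⟩
      exact KmH_adj.mpr ⟨hne, (colR a b hne).mp (by omega)⟩
    · intro i hi j hj hij
      rw [Set.disjoint_left]
      intro e he1 he2
      induction e using Sym2.ind with
      | _ a b =>
        rw [mem_edgeSet] at he1 he2
        exact hij ((adj_iff.mp he1).2.symm.trans (adj_iff.mp he2).2)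
    · ext e
      induction e using Sym2.ind with
      | _ a b =>
        simp only [mem_edgeSet, Set.mem_iUnion, Set.mem_Iio, exists_prop]
        constructor
        · intro h
          rcases KmH_adj.mp h with ⟨hne, hnb⟩
          exact ⟨col a.1 b.1, by have := (colR a b hne).mpr hnb; omega,
            adj_iff.mpr ⟨hne, rfl⟩⟩
        · rintro ⟨j, hj, he⟩
          rcases adj_iff.mp he with ⟨hne, hcol⟩
          exact KmH_adj.mpr ⟨hne, (colR a b hne).mp (by omega)⟩
  · intro i hi
    refine ⟨fun v => ?_, fun v => ?_⟩
    · rw [deg_ncard (by omega), if_pos (Or.inl hi)]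
    · rw [supp_ncard (by omega) v (Or.inl hi), if_neg (by omega)]
  · intro i h1 h2
    exact absurd h2 (by omega)
  · intro i h1 h2
    refine ⟨fun x hx => ?_, fun x hx => ?_, fun x hx => ?_⟩
    · rw [deg_ncard (by omega), if_pos (Or.inr hx)]
    · rw [deg_ncard (by omega), if_neg (by omega)]
    · rw [supp_ncard (by omega) x (Or.inr hx), if_neg (by omega)]
  · intro i h1 h2
    refine ⟨fun x hx => ?_, fun x hx => ?_, fun x hx => ?_⟩
    · rw [deg_ncard (by omega), if_pos (Or.inr hx)]
    · rw [deg_ncard (by omega), if_neg (by omega)]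
    · rw [supp_ncard (by omega) x (Or.inr hx), if_pos (by omega)]
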